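/- Let Z, U be m×n complex matrices with I − Z·Z̄ᵀ positive definite and U·Ūᵀ = I, and let A, B, C, D define a holomorphic automorphism W = (AZ+B)(CZ+D)⁻¹ of ℜ_I(m,n) mapping Z₀ = −A⁻¹B to 0, with I − Z₀Z̄₀ᵀ = (ĀᵀA)⁻¹, I − Z̄₀ᵀZ₀ = (D̄ᵀD)⁻¹, and C̄ᵀD̄ᵀ⁻¹ = A⁻¹B. Then for P(Z,U) = det(I−ZZ̄ᵀ)ⁿ/|det(I−ZŪᵀ)|²ⁿ and V the image of U, one has P(W,V) = P(Z,U)/P(Z₀,U). -/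

import Mathlib

open Matrix Complex ComplexOrder

/-- The Poisson kernel `P(Z,U) = det(I − ZZ̄ᵀ)ⁿ / |det(I − ZŪᵀ)|²ⁿ` of the
Cartan domain `ℜ_I(m,n)`. -/
noncomputable def PoissonI (m n : ℕ) (Z U : Matrix (Fin m) (Fin n) ℂ) : ℂ :=
  ((1 - Z * Zᴴ).det) ^ n / (((‖(1 - Z * Uᴴ).det‖ : ℝ) : ℂ)) ^ (2 * n)

private lemma abs_pow_two_mul' (z : ℂ) (n : ℕ) :
    (((‖z‖ : ℝ) : ℂ)) ^ (2 * n) = (z * (starRingEnd ℂ) z) ^ n := by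
  rw [pow_mul, ← Complex.ofReal_pow, Complex.sq_norm, ← Complex.mul_conj]


private lemma scalar_step (w1 wv aZ b z0 z0u kZ kU dA : ℂ) (n : ℕ)
    (d1 : star kZ * (w1 * kZ) = aZ)
    (d2 : star kZ * (wv * kU) = b)
    (d0 : z0 = (star dA * dA)⁻¹)
    (d0u : dA * z0u = kU)
    (hkZ : kZ ≠ 0) (hkU : kU ≠ 0) (hdA : dA ≠ 0) :
    w1 ^ n / (wv * (starRingEnd ℂ) wv) ^ n
      = (aZ ^ n / (b * (starRingEnd ℂ) b) ^ n)
        / (z0 ^ n / (z0u * (starRingEnd ℂ) z0u) ^ n) := by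
  simp only [Complex.star_def] at d1 d2 d0
  have hckZ : (starRingEnd ℂ) kZ ≠ 0 := star_ne_zero.mpr hkZ
  have hckU : (starRingEnd ℂ) kU ≠ 0 := star_ne_zero.mpr hkU
  have hcdA : (starRingEnd ℂ) dA ≠ 0 := star_ne_zero.mpr hdA
  have hz0u : z0u = kU * dA⁻¹ := by
    rw [← d0u, mul_comm dA z0u, mul_assoc, mul_inv_cancel₀ hdA, mul_one]
  by_cases hwv : wv = 0
  · rcases Nat.eq_zero_or_pos n with hn | hn
    · subst hn; simp
    · have hb : b = 0 := by rw [← d2, hwv, zero_mul, mul_zero]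
      rw [hwv, hb]
      simp [zero_pow hn.ne']
  · have hcwv : (starRingEnd ℂ) wv ≠ 0 := star_ne_zero.mpr hwv
    rw [← d1, ← d2, d0, hz0u]
    have e2 : (starRingEnd ℂ) ((starRingEnd ℂ) kZ * (wv * kU))
        = kZ * ((starRingEnd ℂ) wv * (starRingEnd ℂ) kU) := by
      rw [_root_.map_mul, _root_.map_mul, Complex.conj_conj]
    have e3 : (starRingEnd ℂ) (kU * dA⁻¹)
        = (starRingEnd ℂ) kU * ((starRingEnd ℂ) dA)⁻¹ := by
      rw [_root_.map_mul, map_inv₀]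
    rw [e2, e3]
    field_simp
    ring

theorem poisson_kernel_transformation_RI
    (m n : ℕ) (Z U : Matrix (Fin m) (Fin n) ℂ)
    (hZ : (1 - Z * Zᴴ).PosDef) (hU : U * Uᴴ = 1)
    (A : Matrix (Fin m) (Fin m) ℂ) (B : Matrix (Fin m) (Fin n) ℂ)
    (C : Matrix (Fin n) (Fin m) ℂ) (D : Matrix (Fin n) (Fin n) ℂ)
    (hA : IsUnit A) (hD : IsUnit D)
    (hCZD : IsUnit (C * Z + D)) (hCUD : IsUnit (C * U + D))
    (hauto : ∀ Z' : Matrix (Fin m) (Fin n) ℂ,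
      (A * Z' + B) * (C * Z' + D)⁻¹ = (Aᴴ + Z' * Bᴴ)⁻¹ * (Cᴴ + Z' * Dᴴ))
    (Z₀ : Matrix (Fin m) (Fin n) ℂ) (hZ₀ : Z₀ = -(A⁻¹ * B))
    (h1 : 1 - Z₀ * Z₀ᴴ = (Aᴴ * A)⁻¹)
    (h2 : 1 - Z₀ᴴ * Z₀ = (Dᴴ * D)⁻¹)
    (h3 : Cᴴ * (Dᴴ)⁻¹ = A⁻¹ * B)
    (W V : Matrix (Fin m) (Fin n) ℂ)
    (hW : W = (A * Z + B) * (C * Z + D)⁻¹)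
    (hV : V = (A * U + B) * (C * U + D)⁻¹) :
    PoissonI m n W V = PoissonI m n Z U / PoissonI m n Z₀ U := by
  classical
  -- basic determinant units
  have hdA : IsUnit A.det := (Matrix.isUnit_iff_isUnit_det A).mp hA
  have hdD : IsUnit D.det := (Matrix.isUnit_iff_isUnit_det D).mp hD
  have hdAH : IsUnit Aᴴ.det := by rw [Matrix.det_conjTranspose]; exact hdA.star
  have hdDH : IsUnit Dᴴ.det := by rw [Matrix.det_conjTranspose]; exact hdD.star
  have hAAinv : A * A⁻¹ = 1 := Matrix.mul_nonsing_inv A hdA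
  have hAinvA : A⁻¹ * A = 1 := Matrix.nonsing_inv_mul A hdA
  have hAZ₀ : A * Z₀ = -B := by
    rw [hZ₀, Matrix.mul_neg, ← Matrix.mul_assoc, hAAinv, Matrix.one_mul]
  -- (i) A Aᴴ = 1 + B Bᴴ
  have hAAB : A * Aᴴ = 1 + B * Bᴴ := by
    have e2 : A * (Aᴴ * A)⁻¹ * Aᴴ = 1 := by
      rw [Matrix.mul_inv_rev, ← Matrix.mul_assoc, hAAinv, Matrix.one_mul,
        Matrix.nonsing_inv_mul _ hdAH]
    have e1 : A * (1 - Z₀ * Z₀ᴴ) * Aᴴ = A * Aᴴ - B * Bᴴ := by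
      have e3 : A * (Z₀ * Z₀ᴴ) * Aᴴ = B * Bᴴ := by
        calc A * (Z₀ * Z₀ᴴ) * Aᴴ = (A * Z₀) * (Z₀ᴴ * Aᴴ) := by
              simp only [Matrix.mul_assoc]
          _ = (A * Z₀) * (A * Z₀)ᴴ := by rw [Matrix.conjTranspose_mul]
          _ = (-B) * (-B)ᴴ := by rw [hAZ₀]
          _ = B * Bᴴ := by rw [Matrix.conjTranspose_neg, Matrix.neg_mul, Matrix.mul_neg, neg_neg]
      rw [Matrix.mul_sub, Matrix.mul_one, Matrix.sub_mul, e3]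
    have := e1.symm.trans (by rw [h1, e2])
    -- this : A * Aᴴ - B * Bᴴ = 1
    linear_combination (norm := abel) this
  have hu1BB : (A * Aᴴ) * (A * Aᴴ)⁻¹ = 1 :=
    Matrix.mul_nonsing_inv _ (by rw [Matrix.det_mul]; exact hdA.mul hdAH)
  -- (ii) Dᴴ D = 1 + Bᴴ B
  have hZ₀H : Z₀ᴴ = -(Bᴴ * (Aᴴ)⁻¹) := by
    rw [hZ₀, Matrix.conjTranspose_neg, Matrix.conjTranspose_mul, Matrix.conjTranspose_nonsing_inv]
  have h2' : 1 - Bᴴ * ((A * Aᴴ)⁻¹ * B) = (Dᴴ * D)⁻¹ := by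
    rw [← h2, hZ₀H, hZ₀, Matrix.neg_mul, Matrix.mul_neg, neg_neg, Matrix.mul_inv_rev,
      Matrix.mul_assoc, Matrix.mul_assoc]
  have hDD : Dᴴ * D = 1 + Bᴴ * B := by
    have c1 : (1 + Bᴴ * B) * (1 - Bᴴ * ((A * Aᴴ)⁻¹ * B)) = 1 := by
      have expand : (1 + Bᴴ * B) * (1 - Bᴴ * ((A * Aᴴ)⁻¹ * B))
          = 1 + Bᴴ * B - Bᴴ * (((1 + B * Bᴴ) * (A * Aᴴ)⁻¹) * B) := by
        simp only [Matrix.mul_add, Matrix.add_mul, Matrix.mul_sub, Matrix.sub_mul,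
          Matrix.mul_one, Matrix.one_mul, Matrix.mul_assoc]
        try abel
      rw [expand, ← hAAB, hu1BB, Matrix.one_mul]
      try abel
    have c2 : (Dᴴ * D) * (1 - Bᴴ * ((A * Aᴴ)⁻¹ * B)) = 1 := by
      rw [h2']
      exact Matrix.mul_nonsing_inv _ (by rw [Matrix.det_mul]; exact hdDH.mul hdD)
    have c2' : (1 - Bᴴ * ((A * Aᴴ)⁻¹ * B)) * (Dᴴ * D) = 1 := mul_eq_one_comm.mp c2
    calc Dᴴ * D = 1 * (Dᴴ * D) := by rw [Matrix.one_mul]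
      _ = ((1 + Bᴴ * B) * (1 - Bᴴ * ((A * Aᴴ)⁻¹ * B))) * (Dᴴ * D) := by rw [c1]
      _ = (1 + Bᴴ * B) * ((1 - Bᴴ * ((A * Aᴴ)⁻¹ * B)) * (Dᴴ * D)) := by
          rw [Matrix.mul_assoc]
      _ = 1 + Bᴴ * B := by rw [c2', Matrix.mul_one]
  -- Cᴴ = A⁻¹ * (B * Dᴴ)
  have hCH : Cᴴ = A⁻¹ * (B * Dᴴ) := by
    have := congrArg (fun X => X * Dᴴ) h3
    rw [Matrix.mul_assoc, Matrix.nonsing_inv_mul _ hdDH, Matrix.mul_one] at this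
    rw [this, Matrix.mul_assoc]
  -- (iv) Aᴴ B = Cᴴ D
  have hABCD : Aᴴ * B = Cᴴ * D := by
    calc Aᴴ * B = A⁻¹ * ((A * Aᴴ) * B) := by
          rw [← Matrix.mul_assoc, ← Matrix.mul_assoc, hAinvA, Matrix.one_mul]
      _ = A⁻¹ * ((1 + B * Bᴴ) * B) := by rw [hAAB]
      _ = A⁻¹ * (B * (1 + Bᴴ * B)) := by
          simp only [Matrix.add_mul, Matrix.mul_add, Matrix.one_mul, Matrix.mul_one,
            Matrix.mul_assoc]
      _ = A⁻¹ * (B * (Dᴴ * D)) := by rw [hDD]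
      _ = Cᴴ * D := by rw [hCH, Matrix.mul_assoc, Matrix.mul_assoc]
  -- (vi) Bᴴ A = Dᴴ C
  have hBADC : Bᴴ * A = Dᴴ * C := by
    have := congrArg Matrix.conjTranspose hABCD
    simpa only [Matrix.conjTranspose_mul, Matrix.conjTranspose_conjTranspose] using this
  -- (v) Aᴴ A = 1 + Cᴴ C
  have hAAC : Aᴴ * A = 1 + Cᴴ * C := by
    have hC : C = D * (Bᴴ * (Aᴴ)⁻¹) := by
      have := congrArg Matrix.conjTranspose hCH
      simpa only [Matrix.conjTranspose_mul, Matrix.conjTranspose_conjTranspose,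
        Matrix.conjTranspose_nonsing_inv, Matrix.mul_assoc] using this
    have hCC : Cᴴ * C = A⁻¹ * ((B * Bᴴ) * A) := by
      calc Cᴴ * C = A⁻¹ * ((B * ((Dᴴ * D) * Bᴴ)) * (Aᴴ)⁻¹) := by
            rw [hCH, hC]
            simp only [Matrix.mul_assoc]
        _ = A⁻¹ * ((B * ((1 + Bᴴ * B) * Bᴴ)) * (Aᴴ)⁻¹) := by rw [hDD]
        _ = A⁻¹ * (((B * Bᴴ) * (1 + B * Bᴴ)) * (Aᴴ)⁻¹) := by
            simp only [Matrix.add_mul, Matrix.mul_add, Matrix.one_mul, Matrix.mul_one,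
              Matrix.mul_assoc]
        _ = A⁻¹ * (((B * Bᴴ) * (A * Aᴴ)) * (Aᴴ)⁻¹) := by rw [hAAB]
        _ = A⁻¹ * ((B * Bᴴ) * A) := by
            have : ((B * Bᴴ) * (A * Aᴴ)) * (Aᴴ)⁻¹ = (B * Bᴴ) * A := by
              rw [Matrix.mul_assoc (B * Bᴴ), Matrix.mul_assoc A,
                Matrix.mul_nonsing_inv _ hdAH, Matrix.mul_one]
            rw [this]
    calc Aᴴ * A = A⁻¹ * ((A * Aᴴ) * A) := by
          rw [← Matrix.mul_assoc, ← Matrix.mul_assoc, hAinvA, Matrix.one_mul]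
      _ = A⁻¹ * ((1 + B * Bᴴ) * A) := by rw [hAAB]
      _ = A⁻¹ * (A + (B * Bᴴ) * A) := by rw [Matrix.add_mul, Matrix.one_mul]
      _ = A⁻¹ * A + A⁻¹ * ((B * Bᴴ) * A) := by rw [Matrix.mul_add]
      _ = 1 + Cᴴ * C := by rw [hAinvA, hCC]
  have hBB : Bᴴ * B = Dᴴ * D - 1 := by rw [hDD]; abel
  -- fundamental identity
  have key : ∀ Z₁ Z₂ : Matrix (Fin m) (Fin n) ℂ,
      (Aᴴ + Z₁ * Bᴴ) * (A + B * Z₂ᴴ) - (Cᴴ + Z₁ * Dᴴ) * (C + D * Z₂ᴴ) = 1 - Z₁ * Z₂ᴴ := by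
    intro Z₁ Z₂
    have e : (Aᴴ + Z₁ * Bᴴ) * (A + B * Z₂ᴴ) - (Cᴴ + Z₁ * Dᴴ) * (C + D * Z₂ᴴ)
        = (Aᴴ * A - Cᴴ * C) + ((Aᴴ * B) * Z₂ᴴ - (Cᴴ * D) * Z₂ᴴ)
          + (Z₁ * (Bᴴ * A) - Z₁ * (Dᴴ * C))
          + (Z₁ * ((Bᴴ * B) * Z₂ᴴ) - Z₁ * ((Dᴴ * D) * Z₂ᴴ)) := by
      simp only [Matrix.mul_add, Matrix.add_mul, Matrix.mul_assoc]
      abel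
    rw [e, hAAC, hABCD, hBADC, hBB]
    simp only [Matrix.sub_mul, Matrix.mul_sub, Matrix.one_mul, Matrix.mul_one]
    abel
  -- value form identity
  have key2 : ∀ Z' : Matrix (Fin m) (Fin n) ℂ,
      (Aᴴ + Z' * Bᴴ) * (A * Z' + B) = (Cᴴ + Z' * Dᴴ) * (C * Z' + D) := by
    intro Z'
    have e : (Aᴴ + Z' * Bᴴ) * (A * Z' + B) - (Cᴴ + Z' * Dᴴ) * (C * Z' + D)
        = ((Aᴴ * A) * Z' - (Cᴴ * C) * Z') + (Aᴴ * B - Cᴴ * D)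
          + (Z' * ((Bᴴ * A) * Z') - Z' * ((Dᴴ * C) * Z'))
          + (Z' * (Bᴴ * B) - Z' * (Dᴴ * D)) := by
      simp only [Matrix.mul_add, Matrix.add_mul, Matrix.mul_assoc]
      abel
    have e0 : (Aᴴ + Z' * Bᴴ) * (A * Z' + B) - (Cᴴ + Z' * Dᴴ) * (C * Z' + D) = 0 := by
      rw [e, hAAC, hABCD, hBADC, hBB]
      simp only [Matrix.add_mul, Matrix.sub_mul, Matrix.mul_sub, Matrix.one_mul,
        Matrix.mul_one]
      abel
    exact sub_eq_zero.mp e0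
  -- the transformed points satisfy (Aᴴ + Z Bᴴ) W = Cᴴ + Z Dᴴ
  have hform : ∀ (Z' W' : Matrix (Fin m) (Fin n) ℂ), IsUnit (C * Z' + D) →
      W' = (A * Z' + B) * (C * Z' + D)⁻¹ → (Aᴴ + Z' * Bᴴ) * W' = Cᴴ + Z' * Dᴴ := by
    intro Z' W' hu hw
    have hdet : IsUnit (C * Z' + D).det := (Matrix.isUnit_iff_isUnit_det _).mp hu
    calc (Aᴴ + Z' * Bᴴ) * W' = ((Aᴴ + Z' * Bᴴ) * (A * Z' + B)) * (C * Z' + D)⁻¹ := by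
          rw [hw, Matrix.mul_assoc]
      _ = ((Cᴴ + Z' * Dᴴ) * (C * Z' + D)) * (C * Z' + D)⁻¹ := by rw [key2 Z']
      _ = Cᴴ + Z' * Dᴴ := by
          rw [Matrix.mul_assoc, Matrix.mul_nonsing_inv _ hdet, Matrix.mul_one]
  have hWform : (Aᴴ + Z * Bᴴ) * W = Cᴴ + Z * Dᴴ := hform Z W hCZD hW
  have hVform : (Aᴴ + U * Bᴴ) * V = Cᴴ + U * Dᴴ := hform U V hCUD hV
  -- conjugate transposes
  have hconj : ∀ X : Matrix (Fin m) (Fin n) ℂ, (A + B * Xᴴ)ᴴ = Aᴴ + X * Bᴴ := by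
    intro X
    simp only [Matrix.conjTranspose_add, Matrix.conjTranspose_mul,
      Matrix.conjTranspose_conjTranspose]
  have hWconj : ∀ (X W' : Matrix (Fin m) (Fin n) ℂ),
      (Aᴴ + X * Bᴴ) * W' = Cᴴ + X * Dᴴ → W'ᴴ * (A + B * Xᴴ) = C + D * Xᴴ := by
    intro X W' h
    have := congrArg Matrix.conjTranspose h
    simp only [Matrix.conjTranspose_add, Matrix.conjTranspose_mul,
      Matrix.conjTranspose_conjTranspose] at this
    exact this
  have hWc : Wᴴ * (A + B * Zᴴ) = C + D * Zᴴ := hWconj Z W hWform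
  have hVc : Vᴴ * (A + B * Uᴴ) = C + D * Uᴴ := hWconj U V hVform
  -- main matrix identities
  have big : ∀ (Z₁ Z₂ W₁ W₂ : Matrix (Fin m) (Fin n) ℂ),
      (Aᴴ + Z₁ * Bᴴ) * W₁ = Cᴴ + Z₁ * Dᴴ → W₂ᴴ * (A + B * Z₂ᴴ) = C + D * Z₂ᴴ →
      (Aᴴ + Z₁ * Bᴴ) * ((1 - W₁ * W₂ᴴ) * (A + B * Z₂ᴴ)) = 1 - Z₁ * Z₂ᴴ := by
    intro Z₁ Z₂ W₁ W₂ hf hc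
    calc (Aᴴ + Z₁ * Bᴴ) * ((1 - W₁ * W₂ᴴ) * (A + B * Z₂ᴴ))
        = (Aᴴ + Z₁ * Bᴴ) * (A + B * Z₂ᴴ)
          - ((Aᴴ + Z₁ * Bᴴ) * W₁) * (W₂ᴴ * (A + B * Z₂ᴴ)) := by
          simp only [Matrix.sub_mul, Matrix.mul_sub, Matrix.one_mul, Matrix.mul_assoc]
      _ = (Aᴴ + Z₁ * Bᴴ) * (A + B * Z₂ᴴ) - (Cᴴ + Z₁ * Dᴴ) * (C + D * Z₂ᴴ) := by
          rw [hf, hc]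
      _ = 1 - Z₁ * Z₂ᴴ := key Z₁ Z₂
  have bigZZ := big Z Z W W hWform hWc
  have bigZU := big Z U W V hWform hVc
  -- determinant identities
  have d1 : star (A + B * Zᴴ).det * ((1 - W * Wᴴ).det * (A + B * Zᴴ).det)
      = (1 - Z * Zᴴ).det := by
    have := congrArg Matrix.det bigZZ
    rwa [Matrix.det_mul, Matrix.det_mul, ← hconj Z, Matrix.det_conjTranspose] at this
  have d2 : star (A + B * Zᴴ).det * ((1 - W * Vᴴ).det * (A + B * Uᴴ).det)
      = (1 - Z * Uᴴ).det := by
    have := congrArg Matrix.det bigZU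
    rwa [Matrix.det_mul, Matrix.det_mul, ← hconj Z, Matrix.det_conjTranspose] at this
  have d0 : (1 - Z₀ * Z₀ᴴ).det = (star A.det * A.det)⁻¹ := by
    rw [h1, Matrix.det_nonsing_inv, Matrix.det_mul, Matrix.det_conjTranspose,
      Ring.inverse_eq_inv]
  have d0u : A.det * (1 - Z₀ * Uᴴ).det = (A + B * Uᴴ).det := by
    have e : A * (1 - Z₀ * Uᴴ) = A + B * Uᴴ := by
      rw [Matrix.mul_sub, Matrix.mul_one, ← Matrix.mul_assoc, hAZ₀, Matrix.neg_mul,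
        sub_neg_eq_add]
    have := congrArg Matrix.det e
    rwa [Matrix.det_mul] at this
  -- nonvanishing
  have haZ : (1 - Z * Zᴴ).det ≠ 0 := hZ.det_pos.ne'
  have hkZ : (A + B * Zᴴ).det ≠ 0 := by
    intro h
    apply haZ
    rw [← d1, h, mul_zero, mul_zero]
  have hdAne : A.det ≠ 0 := hdA.ne_zero
  -- 1 - Z₀ᴴ Z₀ is positive definite
  have hDDpos : (Dᴴ * D).PosDef := by
    refine Matrix.PosDef.of_dotProduct_mulVec_pos (Matrix.isHermitian_conjTranspose_mul_self D) fun x hx => ?_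
    rw [← Matrix.mulVec_mulVec, Matrix.dotProduct_mulVec, Matrix.vecMul_conjTranspose,
      star_star]
    rw [Matrix.dotProduct_star_self_pos_iff]
    exact (Matrix.mulVec_injective_iff_isUnit.mpr hD |>.ne_iff' (Matrix.mulVec_zero D)).mpr hx
  have hP : (1 - Z₀ᴴ * Z₀).PosDef := by rw [h2]; exact hDDpos.inv
  have hZ0U : (1 - Z₀ * Uᴴ).det ≠ 0 := by
    intro hdet0
    obtain ⟨v, hv, hveq⟩ := Matrix.exists_mulVec_eq_zero_iff.mpr hdet0
    rw [Matrix.sub_mulVec, Matrix.one_mulVec, sub_eq_zero, ← Matrix.mulVec_mulVec] at hveq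
    -- hveq : v = Z₀ *ᵥ (Uᴴ *ᵥ v)
    have hw : (Uᴴ *ᵥ v) ≠ 0 := by
      intro h
      apply hv
      rw [hveq, h, Matrix.mulVec_zero]
    have hpos := hP.dotProduct_mulVec_pos hw
    have e1 : star (Uᴴ *ᵥ v) ⬝ᵥ (Uᴴ *ᵥ v) = star v ⬝ᵥ v := by
      rw [Matrix.star_mulVec, Matrix.conjTranspose_conjTranspose,
        ← Matrix.dotProduct_mulVec, Matrix.mulVec_mulVec, hU, Matrix.one_mulVec]
    have e2 : star (Uᴴ *ᵥ v) ⬝ᵥ ((Z₀ᴴ * Z₀) *ᵥ (Uᴴ *ᵥ v)) = star v ⬝ᵥ v := by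
      rw [← Matrix.mulVec_mulVec, ← hveq, Matrix.dotProduct_mulVec,
        ← Matrix.star_mulVec, ← hveq]
    rw [Matrix.sub_mulVec, Matrix.one_mulVec, dotProduct_sub, e1, e2, sub_self] at hpos
    exact lt_irrefl 0 hpos
  have hkU : (A + B * Uᴴ).det ≠ 0 := by
    rw [← d0u]
    exact mul_ne_zero hdAne hZ0U
  -- endgame: pure scalar computation
  unfold PoissonI
  rw [abs_pow_two_mul', abs_pow_two_mul', abs_pow_two_mul']
  set w1 := (1 - W * Wᴴ).det with hw1
  set wv := (1 - W * Vᴴ).det with hwv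
  set aZ := (1 - Z * Zᴴ).det with haZd
  set b := (1 - Z * Uᴴ).det with hb
  set z0 := (1 - Z₀ * Z₀ᴴ).det with hz0
  set z0u := (1 - Z₀ * Uᴴ).det with hz0u
  set kZ := (A + B * Zᴴ).det with hkZd
  set kU := (A + B * Uᴴ).det with hkUd
  set dA := A.det with hdAd
  have hz0u' : z0u = kU * dA⁻¹ := by
    field_simp
    rw [mul_comm]
    exact d0u
  exact scalar_step w1 wv aZ b z0 z0u kZ kU dA n d1 d2 d0 d0u hkZ hkU hdAne
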